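/- For every integer g ≥ 11, the integer g² − 5g + 10 divides 2·(g³ − g) if and only if g = 15. Equivalently, for g ≥ 11 with g ≠ 15, the integer (g² − 5g + 10)/2 does not divide g³ − g. -/

import Mathlib

/-- For an integer `g ≥ 11`, `g² − 5g + 10` divides `2(g³ − g)` if and only if `g = 15`;
equivalently, for `g ≥ 11`, `g ≠ 15`, the integer `(g² − 5g + 10)/2` does not divide
`g³ − g`. -/
theorem bielliptic_weight_divisibility (g : ℤ) (hg : 11 ≤ g) :
    ((g ^ 2 - 5 * g + 10 ∣ 2 * (g ^ 3 - g)) ↔ g = 15) ∧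
      (g ≠ 15 → ¬ ((g ^ 2 - 5 * g + 10) / 2 ∣ g ^ 3 - g)) := by
  have main : (g ^ 2 - 5 * g + 10 ∣ 2 * (g ^ 3 - g)) ↔ g = 15 := by
    constructor
    · intro h
      obtain ⟨c, hc⟩ := h
      have h1 : g ^ 2 - 5 * g + 10 ∣ 28 * g - 100 :=
        ⟨c - (2 * g + 10), by linear_combination hc⟩
      have hpos : 0 < 28 * g - 100 := by linarith
      have hle : g ^ 2 - 5 * g + 10 ≤ 28 * g - 100 := Int.le_of_dvd hpos h1
      have hub : g ≤ 29 := by nlinarith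
      interval_cases g <;> revert h1 <;> norm_num
    · rintro rfl
      norm_num
  refine ⟨main, fun hne hd => hne ?_⟩
  have h2 : (2 : ℤ) ∣ g ^ 2 - 5 * g + 10 := by
    rcases Int.even_or_odd g with ⟨k, hk⟩ | ⟨k, hk⟩ <;> subst hk
    · exact ⟨2 * k ^ 2 - 5 * k + 5, by ring⟩
    · exact ⟨2 * k ^ 2 - 3 * k + 3, by ring⟩
  obtain ⟨c, hc⟩ := hd
  apply main.mp
  refine ⟨c, ?_⟩
  have := Int.mul_ediv_cancel' h2
  calc 2 * (g ^ 3 - g) = 2 * ((g ^ 2 - 5 * g + 10) / 2 * c) := by rw [← hc]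
    _ = (2 * ((g ^ 2 - 5 * g + 10) / 2)) * c := by ring
    _ = (g ^ 2 - 5 * g + 10) * c := by rw [this]
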